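/- arXiv:math/0212331 — 2 statements merged into one kernel-verified Lean document; each statement's English description precedes it below -/
import Mathlib

section
/- Let T be a contraction in L(E) and let Γ be a relatively compact subset of P(E). Then Tⁿ(λ) → δ_0 uniformly for λ ∈ Γ; that is, for every open neighborhood U of 0 in E and every ε > 0 there exists N such that (Tⁿ(λ))(E \ U) < ε for all n ≥ N and all λ ∈ Γ. -/
open MeasureTheory Topology Filter Set

namespace SemiSelfDecomp

variable (E : Type*) [MetricSpace E] [CompleteSpace E] [TopologicalSpace.SeparableSpace E]
  [AddCommGroup E] [Module ℝ E] [IsTopologicalAddGroup E] [ContinuousSMul ℝ E]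
  [MeasurableSpace E] [BorelSpace E]

variable {E}

/-- The Dirac measure at a point, as a probability measure. -/
noncomputable def diracP (x : E) : ProbabilityMeasure E :=
  ⟨Measure.dirac x, inferInstance⟩

/-- Convolution of probability measures. -/
noncomputable def pconv (μ ν : ProbabilityMeasure E) : ProbabilityMeasure E :=
  ⟨(μ : Measure E).conv (ν : Measure E), inferInstance⟩

/-- Pushforward of a probability measure under a continuous linear automorphism. -/
noncomputable def pmap (T : E ≃L[ℝ] E) (μ : ProbabilityMeasure E) : ProbabilityMeasure E :=
  μ.map (f := T) (T.continuous.measurable.aemeasurable)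

/-- The convolution product `f 0 ∗ f 1 ∗ ⋯ ∗ f (k-1)`. -/
noncomputable def convProd (f : ℕ → ProbabilityMeasure E) : ℕ → ProbabilityMeasure E
  | 0 => diracP 0
  | n + 1 => pconv (convProd f n) (f n)

/-- The `k`-fold convolution power of `μ`. -/
noncomputable def convPow (μ : ProbabilityMeasure E) : ℕ → ProbabilityMeasure E
  | 0 => diracP 0
  | n + 1 => pconv (convPow μ n) μ

/-- `μ` is infinitely divisible if for every `n ≥ 1` it has an `n`-th convolution root. -/
def InfinitelyDivisible (μ : ProbabilityMeasure E) : Prop :=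
  ∀ n : ℕ, 1 ≤ n → ∃ ν : ProbabilityMeasure E, convPow ν n = μ

/-- The set of infinitely divisible probability measures on `E`. -/
def IDiv : Set (ProbabilityMeasure E) := {μ | InfinitelyDivisible μ}

/-- A continuous convolution semigroup, parametrized by `t ∈ [0, ∞)` (as `ℝ≥0`). -/
def IsCCS (c : NNReal → ProbabilityMeasure E) : Prop :=
  Continuous c ∧ ∀ s t : NNReal, c (s + t) = pconv (c s) (c t)

/-- `μ` is embeddable if it is the time-one measure of a continuous convolution semigroup. -/
def Embeddable (μ : ProbabilityMeasure E) : Prop :=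
  ∃ c : NNReal → ProbabilityMeasure E, IsCCS c ∧ c 1 = μ

variable (E) in
/-- `E` is strongly root compact. -/
def StronglyRootCompact : Prop :=
  ∀ C : Set E, IsCompact C → ∃ C₀ : Set E, IsCompact C₀ ∧
    ∀ (n : ℕ) (x : ℕ → E), x n = 0 →
      (∀ i j : ℕ, 1 ≤ i → 1 ≤ j → i + j ≤ n →
        ∃ c₁ ∈ C, ∃ c₂ ∈ C, ∃ c₃ ∈ C, c₁ + x i + c₂ + x j = c₃ + x (i + j)) →
      ∀ i : ℕ, 1 ≤ i → i ≤ n → x i ∈ C₀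

/-- A triangular system with rows `(lam n i)_{i < k n}` is infinitesimal. -/
def IsInfinitesimalSystem (k : ℕ → ℕ) (lam : ℕ → ℕ → ProbabilityMeasure E) : Prop :=
  ∀ U : Set E, IsOpen U → (0 : E) ∈ U → ∀ ε : NNReal, 0 < ε →
    ∃ N : ℕ, ∀ n ≥ N, ∀ i < k n, lam n i Uᶜ < ε

/-- A continuous invertible linear operator is contracting if `Tⁿ x → 0` for every `x`. -/
def IsContraction (T : E ≃L[ℝ] E) : Prop :=
  ∀ x : E, Tendsto (fun n : ℕ => (T ^ n) x) atTop (𝓝 0)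

/-- `T` belongs to `𝓛₊`: a strongly continuous one-parameter group `(T_t)_{t > 0}` of
continuous invertible linear operators, multiplicative in `t`, with `T_t x → 0` as `t → 0⁺`. -/
def IsLPlus (T : ℝ → E ≃L[ℝ] E) : Prop :=
  (∀ s t : ℝ, 0 < s → 0 < t → T (s * t) = (T s).trans (T t)) ∧
  (∀ x : E, ContinuousOn (fun t : ℝ => T t x) (Set.Ioi 0)) ∧
  (∀ x : E, Tendsto (fun t : ℝ => T t x) (𝓝[>] 0) (𝓝 0))

/-- `μ` is `T`-semi-selfdecomposable. -/
def TSemiSelfdecomposable (T : E ≃L[ℝ] E) (μ : ProbabilityMeasure E) : Prop :=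
  ∃ (ν : ℕ → ProbabilityMeasure E) (N : ℕ → ℕ) (Ts : ℕ → E ≃L[ℝ] E) (x : ℕ → E),
    StrictMono N ∧
    IsInfinitesimalSystem N (fun n i => pmap (Ts n) (ν i)) ∧
    Tendsto (fun n => pconv (pmap (Ts n) (convProd ν (N n))) (diracP (x n))) atTop (𝓝 μ) ∧
    (∀ y : E, Tendsto (fun n => (Ts (n + 1)) ((Ts n).symm y)) atTop (𝓝 (T y)))

/-- `μ` is `T`-decomposable with co-factor `ν`. -/
def TDecomposableWith (T : E ≃L[ℝ] E) (μ ν : ProbabilityMeasure E) : Prop :=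
  μ = pconv (pmap T μ) ν

/-- `μ` is strongly `T`-decomposable with co-factor `ν`:
`μ = T(μ) ν` and `Tⁿ(μ) → δ₀`. -/
def StronglyTDecomposableWith (T : E ≃L[ℝ] E) (μ ν : ProbabilityMeasure E) : Prop :=
  TDecomposableWith T μ ν ∧
    Tendsto (fun n : ℕ => pmap (T ^ n) μ) atTop (𝓝 (diracP (0 : E)))

/-- The class `K̃(H, b, (T_t))`. -/
def KtildeClass (H : Set (ProbabilityMeasure E)) (b : ℝ) (T : ℝ → E ≃L[ℝ] E) :
    Set (ProbabilityMeasure E) :=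
  {μ | ∃ (μs : ℕ → ProbabilityMeasure E) (a : ℕ → ℝ) (k : ℕ → ℕ) (x : ℕ → E),
    (∀ n, μs n ∈ H) ∧ (∀ n, 0 < a n) ∧ StrictMono k ∧
    Tendsto (fun n => a n / a (n + 1)) atTop (𝓝 b) ∧
    Tendsto (fun n => pconv (pmap (T (1 / a n)) (convProd μs (k n))) (diracP (x n)))
      atTop (𝓝 μ)}

/-- The class `K(H, b, (T_t))`: as `K̃` but with an infinitesimal system. -/
def KClass (H : Set (ProbabilityMeasure E)) (b : ℝ) (T : ℝ → E ≃L[ℝ] E) :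
    Set (ProbabilityMeasure E) :=
  {μ | ∃ (μs : ℕ → ProbabilityMeasure E) (a : ℕ → ℝ) (k : ℕ → ℕ) (x : ℕ → E),
    (∀ n, μs n ∈ H) ∧ (∀ n, 0 < a n) ∧ StrictMono k ∧
    Tendsto (fun n => a n / a (n + 1)) atTop (𝓝 b) ∧
    IsInfinitesimalSystem k (fun n i => pmap (T (1 / a n)) (μs i)) ∧
    Tendsto (fun n => pconv (pmap (T (1 / a n)) (convProd μs (k n))) (diracP (x n)))
      atTop (𝓝 μ)}

/-- `H` is `(T_t)`-completely closed. -/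
def CompletelyClosed (T : ℝ → E ≃L[ℝ] E) (H : Set (ProbabilityMeasure E)) : Prop :=
  IsClosed H ∧ (∀ μ ∈ H, ∀ ν ∈ H, pconv μ ν ∈ H) ∧
    (∀ a : ℝ, 0 < a → ∀ x : E, ∀ μ ∈ H, pconv (pmap (T a) μ) (diracP x) ∈ H)

/-- `H ⊆ I(E)` is `(T_t)`-completely closed in the strong sense. -/
def CompletelyClosedStrong (T : ℝ → E ≃L[ℝ] E) (H : Set (ProbabilityMeasure E)) : Prop :=
  H ⊆ IDiv ∧ CompletelyClosed T H ∧
    ∀ μ ∈ H, ∃ c : NNReal → ProbabilityMeasure E, IsCCS c ∧ c 1 = μ ∧ ∀ t : NNReal, c t ∈ H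

/-- The nested classes `L_m(b, (T_t))` for finite `m`. -/
def LClass (b : ℝ) (T : ℝ → E ≃L[ℝ] E) : ℕ → Set (ProbabilityMeasure E)
  | 0 => KClass Set.univ b T
  | m + 1 => KClass (LClass b T m) b T

/-- The nested classes `L̃_m(b, (T_t))` for finite `m`. -/
def LtildeClass (b : ℝ) (T : ℝ → E ≃L[ℝ] E) : ℕ → Set (ProbabilityMeasure E)
  | 0 => KtildeClass Set.univ b T
  | m + 1 => KtildeClass (LtildeClass b T m) b T

/-- `L_m(b, (T_t))` for `m ∈ ℕ ∪ {∞}`. -/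
def LClassE (b : ℝ) (T : ℝ → E ≃L[ℝ] E) : ℕ∞ → Set (ProbabilityMeasure E)
  | (m : ℕ) => LClass b T m
  | ⊤ => ⋂ m : ℕ, LClass b T m

/-- The predecessor class `L_{m-1}(b,(T_t))`, with `L_{-1} = I(E)` and `L_{∞-1} = L_∞`. -/
def LClassPred (b : ℝ) (T : ℝ → E ≃L[ℝ] E) : ℕ∞ → Set (ProbabilityMeasure E)
  | (0 : ℕ) => IDiv
  | ((m + 1 : ℕ) : ℕ∞) => LClass b T m
  | ⊤ => ⋂ m : ℕ, LClass b T m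

/-- `L̃_m(b, (T_t))` for `m ∈ ℕ ∪ {∞}`. -/
def LtildeClassE (b : ℝ) (T : ℝ → E ≃L[ℝ] E) : ℕ∞ → Set (ProbabilityMeasure E)
  | (m : ℕ) => LtildeClass b T m
  | ⊤ => ⋂ m : ℕ, LtildeClass b T m

/-- The predecessor class `L̃_{m-1}(b,(T_t))`, with `L̃_{-1} = P(E)` and `L̃_{∞-1} = L̃_∞`. -/
def LtildeClassPred (b : ℝ) (T : ℝ → E ≃L[ℝ] E) : ℕ∞ → Set (ProbabilityMeasure E)
  | (0 : ℕ) => Set.univ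
  | ((m + 1 : ℕ) : ℕ∞) => LtildeClass b T m
  | ⊤ => ⋂ m : ℕ, LtildeClass b T m

/-- The class `K(H, [0,1], (T_t)) = ⋂_{0 < b < 1} K(H, b, (T_t))`. -/
def KClassI (H : Set (ProbabilityMeasure E)) (T : ℝ → E ≃L[ℝ] E) :
    Set (ProbabilityMeasure E) :=
  ⋂ b ∈ Set.Ioo (0 : ℝ) 1, KClass H b T

/-- The class `K̃(H, [0,1], (T_t)) = ⋂_{0 < b < 1} K̃(H, b, (T_t))`. -/
def KtildeClassI (H : Set (ProbabilityMeasure E)) (T : ℝ → E ≃L[ℝ] E) :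
    Set (ProbabilityMeasure E) :=
  ⋂ b ∈ Set.Ioo (0 : ℝ) 1, KtildeClass H b T

/-- The nested classes `L_m([0,1], (T_t))` for finite `m`. -/
def LClassI (T : ℝ → E ≃L[ℝ] E) : ℕ → Set (ProbabilityMeasure E)
  | 0 => KClassI Set.univ T
  | m + 1 => KClassI (LClassI T m) T

/-- The nested classes `L̃_m([0,1], (T_t))` for finite `m`. -/
def LtildeClassI (T : ℝ → E ≃L[ℝ] E) : ℕ → Set (ProbabilityMeasure E)
  | 0 => KtildeClassI Set.univ T
  | m + 1 => KtildeClassI (LtildeClassI T m) T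

/-- `L_m([0,1], (T_t))` for `m ∈ ℕ ∪ {∞}`. -/
def LClassIE (T : ℝ → E ≃L[ℝ] E) : ℕ∞ → Set (ProbabilityMeasure E)
  | (m : ℕ) => LClassI T m
  | ⊤ => ⋂ m : ℕ, LClassI T m

/-- `L̃_m([0,1], (T_t))` for `m ∈ ℕ ∪ {∞}`. -/
def LtildeClassIE (T : ℝ → E ≃L[ℝ] E) : ℕ∞ → Set (ProbabilityMeasure E)
  | (m : ℕ) => LtildeClassI T m
  | ⊤ => ⋂ m : ℕ, LtildeClassI T m

/-- `μ` is operator selfdecomposable with respect to `(T_t)`. -/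
def OperatorSelfdecomposable (T : ℝ → E ≃L[ℝ] E) (μ : ProbabilityMeasure E) : Prop :=
  ∃ (μs : ℕ → ProbabilityMeasure E) (x : ℕ → E) (b : ℕ → ℝ),
    (∀ n, 0 < b n) ∧
    IsInfinitesimalSystem (fun n => n) (fun n i => pmap (T (1 / b n)) (μs i)) ∧
    Tendsto (fun n => pconv (pmap (T (1 / b n)) (convProd μs n)) (diracP (x n)))
      atTop (𝓝 μ)


open scoped ENNReal NNReal

/-- The set of probability measures assigning at least `c` to a fixed closed set is closed. -/
lemma aux_isClosed_le_measure {F : Set E} (hF : IsClosed F) (c : ℝ≥0∞) :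
    IsClosed {μ : ProbabilityMeasure E | c ≤ (μ : Measure E) F} := by
  set S := {μ : ProbabilityMeasure E | c ≤ (μ : Measure E) F} with hS
  refine isClosed_of_closure_subset fun μ hμ => ?_
  set L : Filter (ProbabilityMeasure E) := 𝓝 μ ⊓ 𝓟 S with hL
  haveI hnb : L.NeBot := mem_closure_iff_clusterPt.mp hμ
  have htend : Tendsto (id : ProbabilityMeasure E → ProbabilityMeasure E)
      L (𝓝 μ) := tendsto_id.mono_left inf_le_left
  have key := ProbabilityMeasure.limsup_measure_closed_le_of_tendsto (μs := id) htend hF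
  refine le_trans ?_ key
  refine Filter.le_limsup_of_frequently_le ?_
    ⟨⊤, eventually_map.mpr (Eventually.of_forall fun _ => le_top)⟩
  have hev : ∀ᶠ (ν : ProbabilityMeasure E) in L, c ≤ (ν : Measure E) F :=
    (eventually_principal.mpr (fun ν hν => hν)).filter_mono inf_le_right
  exact hev.frequently

/-- Prokhorov: a relatively compact family of probability measures is tight. -/
lemma aux_tight (Γ : Set (ProbabilityMeasure E)) (hΓ : IsCompact (closure Γ))
    {ε : ℝ≥0∞} (hε : 0 < ε) (hεtop : ε ≠ ⊤) :
    ∃ K : Set E, IsCompact K ∧ ∀ lam ∈ Γ, (lam : Measure E) Kᶜ < ε := by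
  have nE : Nonempty E := ⟨0⟩
  set u : ℕ → E := TopologicalSpace.denseSeq E with hu_def
  have hu : DenseRange u := TopologicalSpace.denseRange_denseSeq E
  -- key claim: for any δ > 0 and η > 0, some finite union of δ-balls has measure ≥ 1 - η
  -- uniformly over closure Γ
  have key : ∀ δ : ℝ, 0 < δ → ∀ η : ℝ≥0∞, 0 < η →
      ∃ k : ℕ, ∀ lam ∈ closure Γ,
        (lam : Measure E) (⋃ i ∈ Finset.range (k + 1), Metric.ball (u i) δ)ᶜ < η := by
    intro δ hδ η hη
    by_contra hcon
    push_neg at hcon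
    set G : ℕ → Set E := fun k => ⋃ i ∈ Finset.range (k + 1), Metric.ball (u i) δ with hG
    have hGopen : ∀ k, IsOpen (G k) := fun k =>
      isOpen_biUnion fun i _ => Metric.isOpen_ball
    have hGmono : ∀ k, G k ⊆ G (k + 1) := by
      intro k
      intro x hx
      simp only [hG, Set.mem_iUnion, Finset.mem_range, exists_prop] at hx ⊢
      obtain ⟨i, hi, hxi⟩ := hx
      exact ⟨i, by omega, hxi⟩
    set Fs : ℕ → Set (ProbabilityMeasure E) := fun k =>
      closure Γ ∩ {μ : ProbabilityMeasure E | η ≤ (μ : Measure E) (G k)ᶜ} with hFs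
    have hFsc : ∀ k, IsClosed (Fs k) := fun k =>
      isClosed_closure.inter (aux_isClosed_le_measure (isClosed_compl_iff.mpr (hGopen k)) η)
    have hanti : ∀ k, Fs (k + 1) ⊆ Fs k := by
      intro k μ hμ
      refine ⟨hμ.1, ?_⟩
      have h2 : η ≤ (μ : Measure E) (G (k + 1))ᶜ := hμ.2
      exact le_trans h2 (measure_mono (compl_subset_compl.mpr (hGmono k)))
    have hne : ∀ k, (Fs k).Nonempty := by
      intro k
      obtain ⟨lam, hlam1, hlam2⟩ := hcon k
      exact ⟨lam, hlam1, hlam2⟩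
    obtain ⟨lam, hlam⟩ := IsCompact.nonempty_iInter_of_sequence_nonempty_isCompact_isClosed
      Fs hanti hne
      (hΓ.inter_right (aux_isClosed_le_measure (isClosed_compl_iff.mpr (hGopen 0)) η)) hFsc
    simp only [Set.mem_iInter, hFs, Set.mem_inter_iff, Set.mem_setOf_eq] at hlam
    -- the complements (G k)ᶜ decrease to ∅
    have hcover : ⋃ k, G k = Set.univ := by
      ext x
      simp only [Set.mem_iUnion, Set.mem_univ, iff_true]
      obtain ⟨i, hi⟩ := hu.exists_dist_lt x hδ
      exact ⟨i, Set.mem_biUnion (Finset.self_mem_range_succ i) (by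
        simpa [Metric.mem_ball, dist_comm] using hi)⟩
    have hempty : ⋂ k, (G k)ᶜ = (∅ : Set E) := by
      rw [← Set.compl_iUnion, hcover, Set.compl_univ]
    have htendsto : Tendsto (fun k => (lam : Measure E) (G k)ᶜ) atTop (𝓝 0) := by
      have := tendsto_measure_iInter_atTop (μ := (lam : Measure E)) (s := fun k => (G k)ᶜ)
        (fun k => ((hGopen k).isClosed_compl.measurableSet).nullMeasurableSet)
        (antitone_nat_of_succ_le fun k => compl_subset_compl.mpr (hGmono k))
        ⟨0, measure_ne_top _ _⟩
      rwa [hempty, measure_empty] at this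
    have : η ≤ 0 := ge_of_tendsto htendsto (Eventually.of_forall fun k => (hlam k).2)
    exact absurd this (not_le.mpr hη)
  -- choose for each j a good finite union of (1/(j+1))-balls
  have hkey : ∀ j : ℕ, ∃ k : ℕ, ∀ lam ∈ closure Γ,
      (lam : Measure E) (⋃ i ∈ Finset.range (k + 1), Metric.ball (u i) (1 / (j + 1)))ᶜ
        < ε * 2⁻¹ ^ (j + 2) := by
    intro j
    refine key (1 / (j + 1)) (by positivity) _ ?_
    refine ENNReal.mul_pos hε.ne' ?_
    exact (ENNReal.pow_pos (by norm_num) _).ne'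
  choose k hk using hkey
  set B : ℕ → Set E := fun j => ⋃ i ∈ Finset.range (k j + 1), Metric.ball (u i) (1 / (j + 1))
    with hB
  refine ⟨⋂ j, closure (B j), ?_, ?_⟩
  · -- compactness: closed and totally bounded
    refine TotallyBounded.isCompact_of_isClosed ?_ (isClosed_iInter fun j => isClosed_closure)
    rw [Metric.totallyBounded_iff]
    intro δ hδ
    obtain ⟨j, hj⟩ := exists_nat_one_div_lt (half_pos hδ)
    refine ⟨u '' (Finset.range (k j + 1) : Set ℕ), (Finset.range (k j + 1)).finite_toSet.image u,
      ?_⟩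
    have h1 : closure (B j)
        ⊆ ⋃ i ∈ Finset.range (k j + 1), Metric.closedBall (u i) (1 / (j + 1)) := by
      refine closure_minimal (Set.iUnion₂_mono fun i _ => Metric.ball_subset_closedBall) ?_
      exact Set.Finite.isClosed_biUnion (Finset.range (k j + 1)).finite_toSet
        fun i _ => Metric.isClosed_closedBall
    have h2 : ∀ i ∈ Finset.range (k j + 1),
        Metric.closedBall (u i) (1 / (j + 1)) ⊆ Metric.ball (u i) δ := fun i _ =>
      Metric.closedBall_subset_ball (by linarith)
    refine (Set.iInter_subset _ j).trans (h1.trans ?_)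
    intro x hx
    simp only [Set.mem_iUnion, exists_prop] at hx
    obtain ⟨i, hi, hxi⟩ := hx
    exact Set.mem_biUnion ⟨i, by simpa using hi, rfl⟩ (h2 i hi hxi)
  · intro lam hlam
    have hsub : (⋂ j, closure (B j))ᶜ ⊆ ⋃ j, (B j)ᶜ := by
      rw [Set.compl_iInter]
      exact Set.iUnion_mono fun j => compl_subset_compl.mpr subset_closure
    calc (lam : Measure E) (⋂ j, closure (B j))ᶜ
        ≤ (lam : Measure E) (⋃ j, (B j)ᶜ) := measure_mono hsub
      _ ≤ ∑' j, (lam : Measure E) (B j)ᶜ := measure_iUnion_le _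
      _ ≤ ∑' j : ℕ, ε * 2⁻¹ ^ (j + 2) :=
          ENNReal.tsum_le_tsum fun j => (hk j lam (subset_closure hlam)).le
      _ < ε := by
          have hsum : ∑' j : ℕ, (ε * 2⁻¹ ^ (j + 2) : ℝ≥0∞) = ε * 2⁻¹ := by
            rw [ENNReal.tsum_mul_left]
            congr 1
            have h1 : ∀ j : ℕ, ((2 : ℝ≥0∞)⁻¹) ^ (j + 2) = 2⁻¹ ^ j * (2⁻¹ * 2⁻¹) := by
              intro j; rw [pow_add]; ring
            rw [tsum_congr h1, ENNReal.tsum_mul_right, ENNReal.tsum_geometric,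
              ENNReal.one_sub_inv_two, inv_inv, ← mul_assoc,
              ENNReal.mul_inv_cancel two_ne_zero ENNReal.ofNat_ne_top, one_mul]
          rw [hsum, show (ε * 2⁻¹ : ℝ≥0∞) = ε / 2 by rw [ENNReal.div_eq_inv_mul, mul_comm]]
          exact ENNReal.half_lt_self hε.ne' hεtop

/-- Banach–Steinhaus type statement via Baire: the powers of a contraction converge to zero
uniformly on compact sets. -/
lemma aux_uniform_on_compact (T : E ≃L[ℝ] E) (hT : IsContraction T) {K : Set E}
    (hK : IsCompact K) {U : Set E} (hU : U ∈ 𝓝 (0 : E)) :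
    ∃ N : ℕ, ∀ n ≥ N, ∀ x ∈ K, (T ^ n) x ∈ U := by
  obtain ⟨V, hV, hVU⟩ := exists_nhds_zero_half hU
  obtain ⟨W, hW, hWV⟩ := exists_nhds_zero_half hV
  have hnegW : (fun z : E => -z) ⁻¹' W ∈ 𝓝 (0 : E) := by
    apply continuous_neg.continuousAt.preimage_mem_nhds
    simpa using hW
  obtain ⟨C, hCmem, hCclosed, hCsub⟩ := exists_mem_nhds_isClosed_subset (inter_mem hW hnegW)
  have hCW : C ⊆ W := hCsub.trans inter_subset_left
  have hCnegW : ∀ c ∈ C, -c ∈ W := fun c hc => (hCsub.trans inter_subset_right) hc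
  have h0W : (0 : E) ∈ W := mem_of_mem_nhds hW
  have hWsubV : W ⊆ V := fun w hw => by simpa using hWV w hw 0 h0W
  -- Baire category argument
  set Em : ℕ → Set E := fun m => {x | ∀ n, m ≤ n → (T ^ n) x ∈ C} with hEm
  have hEmc : ∀ m, IsClosed (Em m) := by
    intro m
    have : Em m = ⋂ n, ⋂ _ : m ≤ n, (fun x => (T ^ n) x) ⁻¹' C := by
      ext x; simp [hEm]
    rw [this]
    exact isClosed_iInter fun n => isClosed_iInter fun _ =>
      hCclosed.preimage (T ^ n).continuous
  have hEmU : ⋃ m, Em m = Set.univ := by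
    ext x
    simp only [Set.mem_iUnion, Set.mem_univ, iff_true]
    obtain ⟨m, hm⟩ := eventually_atTop.mp (mem_map.mp ((hT x) hCmem))
    exact ⟨m, fun n hn => hm n hn⟩
  obtain ⟨m, hm⟩ := nonempty_interior_of_iUnion_of_closed hEmc hEmU
  obtain ⟨x₀, hx₀⟩ := hm
  set O : Set E := (fun v : E => x₀ + v) ⁻¹' interior (Em m) with hO
  have hOnhds : O ∈ 𝓝 (0 : E) := by
    apply (continuous_const.add continuous_id).continuousAt.preimage_mem_nhds
    simpa using isOpen_interior.mem_nhds hx₀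
  -- cover K by finitely many translates of O
  obtain ⟨t, htK, htcov⟩ := hK.elim_nhds_subcover (fun y => (fun z : E => z - y) ⁻¹' O)
    (fun y _ => (continuous_id.sub continuous_const).continuousAt.preimage_mem_nhds
      (by simpa using hOnhds))
  have hg : ∀ y : E, ∃ N : ℕ, ∀ n ≥ N, (T ^ n) y ∈ C := fun y =>
    eventually_atTop.mp (mem_map.mp ((hT y) hCmem))
  choose g hgspec using hg
  refine ⟨max m (t.sup g), fun n hn x hx => ?_⟩
  obtain ⟨y, hyt, hxy⟩ := Set.mem_iUnion₂.mp (htcov hx)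
  have hmn : m ≤ n := (le_max_left _ _).trans hn
  have h1 : (T ^ n) y ∈ C :=
    hgspec y n (((Finset.le_sup hyt).trans (le_max_right _ _)).trans hn)
  have hmem : x₀ + (x - y) ∈ Em m := interior_subset hxy
  have h2 : (T ^ n) (x₀ + (x - y)) ∈ C := hmem n hmn
  have h3 : (T ^ n) x₀ ∈ C := (interior_subset hx₀) n hmn
  have heq : (T ^ n) x = (T ^ n) y + ((T ^ n) (x₀ + (x - y)) - (T ^ n) x₀) := by
    rw [map_add, map_sub]
    abel
  rw [heq, sub_eq_add_neg]
  exact hVU _ (hWsubV (hCW h1)) _ (hWV _ (hCW h2) _ (hCnegW _ h3))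

/-- For a contraction `T` and a relatively compact set `Γ` of probability
measures, `Tⁿ(λ) → δ₀` uniformly for `λ ∈ Γ`. -/
theorem stmt0 (T : E ≃L[ℝ] E) (hT : IsContraction T)
    (Γ : Set (ProbabilityMeasure E)) (hΓ : IsCompact (closure Γ)) :
    ∀ U : Set E, IsOpen U → (0 : E) ∈ U → ∀ ε : NNReal, 0 < ε →
      ∃ N : ℕ, ∀ n ≥ N, ∀ lam ∈ Γ, (pmap (T ^ n) lam) Uᶜ < ε := by
  intro U hUopen hU0 ε hε
  obtain ⟨K, hKcomp, hK⟩ := aux_tight Γ hΓ (ε := (ε : ℝ≥0∞))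
    (by exact_mod_cast hε) ENNReal.coe_ne_top
  obtain ⟨N, hN⟩ := aux_uniform_on_compact T hT hKcomp (hUopen.mem_nhds hU0)
  refine ⟨N, fun n hn lam hlam => ?_⟩
  rw [← ENNReal.coe_lt_coe, ProbabilityMeasure.ennreal_coeFn_eq_coeFn_toMeasure]
  have hmap : ((pmap (T ^ n) lam : ProbabilityMeasure E) : Measure E)
      = (lam : Measure E).map (T ^ n) := by
    simp [pmap, ProbabilityMeasure.toMeasure_map]
  rw [hmap, Measure.map_apply (T ^ n).continuous.measurable
    hUopen.isClosed_compl.measurableSet]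
  have hsub : (fun x => (T ^ n) x) ⁻¹' Uᶜ ⊆ Kᶜ := by
    intro x hx
    intro hxK
    exact hx (hN n hn x hxK)
  exact lt_of_le_of_lt (measure_mono hsub) (hK lam hlam)

end SemiSelfDecomp
end

section
/- Let (T_t) ∈ L₊ and let Γ be a relatively compact subset of P(E). Then T_t(λ) → δ_0 as t → 0 uniformly for λ ∈ Γ; that is, for every ε > 0 and every open neighborhood U of 0 in E there exists s > 0 such that (T_t(λ))(E \ U) < ε for all 0 < t < s and all λ ∈ Γ. -/
open MeasureTheory Topology Filter Set

namespace SemiSelfDecomp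

variable (E : Type*) [MetricSpace E] [CompleteSpace E] [TopologicalSpace.SeparableSpace E]
  [AddCommGroup E] [Module ℝ E] [IsTopologicalAddGroup E] [ContinuousSMul ℝ E]
  [MeasurableSpace E] [BorelSpace E]

variable {E}

open scoped ENNReal NNReal Pointwise

set_option linter.unusedSectionVars false
set_option maxHeartbeats 1000000

lemma aux_tight_s17 (μ : Measure E) [IsProbabilityMeasure μ] {ε : ℝ≥0∞} (hε : 0 < ε) :
    ∃ K : Set E, IsCompact K ∧ μ Kᶜ < ε := by
  have : Nonempty E := ⟨0⟩
  obtain ⟨δ, δpos, hδ⟩ := ENNReal.exists_pos_sum_of_countable hε.ne' ℕ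
  set u : ℕ → E := TopologicalSpace.denseSeq E with hu_def
  have hu : DenseRange u := TopologicalSpace.denseRange_denseSeq E
  set S : ℕ → ℕ → Set E := fun n m =>
    ⋃ i ∈ Finset.range (m + 1), Metric.closedBall (u i) (1 / (n + 1)) with hS
  have Sclosed : ∀ n m, IsClosed (S n m) := by
    intro n m
    exact isClosed_biUnion_finset fun i _ => Metric.isClosed_closedBall
  have Smono : ∀ n, Monotone (S n) := by
    intro n a b hab
    exact Set.biUnion_subset_biUnion_left
      (fun i hi => Finset.mem_coe.mpr (Finset.mem_range.mpr
        (lt_of_lt_of_le (Finset.mem_range.mp (Finset.mem_coe.mp hi)) (by omega))))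
  have hSU : ∀ n, ⋃ m, S n m = Set.univ := by
    intro n
    ext x
    simp only [Set.mem_iUnion, Set.mem_univ, iff_true]
    obtain ⟨i, hi⟩ := Metric.denseRange_iff.mp hu x (1 / (n + 1)) (by positivity)
    exact ⟨i, Set.mem_biUnion (Finset.self_mem_range_succ i) (by
      simpa [Metric.mem_closedBall, dist_comm] using hi.le)⟩
  have key : ∀ n : ℕ, ∃ m : ℕ, μ (S n m)ᶜ < δ n := by
    intro n
    have h1 : Tendsto (μ ∘ fun m => (S n m)ᶜ) atTop (𝓝 (μ (⋂ m, (S n m)ᶜ))) := by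
      refine tendsto_measure_iInter_atTop
        (fun m => ((Sclosed n m).measurableSet).nullMeasurableSet.compl)
        (fun a b hab => Set.compl_subset_compl.mpr (Smono n hab)) ⟨0, measure_ne_top μ _⟩
    have h2 : (⋂ m, (S n m)ᶜ) = ∅ := by
      rw [← Set.compl_iUnion, hSU n, Set.compl_univ]
    rw [h2, measure_empty] at h1
    have := h1.eventually_lt_const (ENNReal.coe_pos.mpr (δpos n))
    exact this.exists
  choose m hm using key
  refine ⟨⋂ n, S n (m n), ?_, ?_⟩
  · refine TotallyBounded.isCompact_of_isClosed ?_ (isClosed_iInter fun n => Sclosed n (m n))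
    rw [Metric.totallyBounded_iff]
    intro r hr
    obtain ⟨n, hn⟩ := exists_nat_one_div_lt hr
    refine ⟨u '' (Finset.range (m n + 1) : Set ℕ), (Set.toFinite _).image u, ?_⟩
    intro x hx
    have hx' : x ∈ S n (m n) := Set.mem_iInter.mp hx n
    simp only [hS, Set.mem_iUnion] at hx'
    obtain ⟨i, hi, hxi⟩ := hx'
    refine Set.mem_biUnion ⟨i, by simpa using hi, rfl⟩ ?_
    exact Metric.closedBall_subset_ball (by exact_mod_cast hn) hxi
  · calc μ (⋂ n, S n (m n))ᶜ = μ (⋃ n, (S n (m n))ᶜ) := by rw [Set.compl_iInter]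
    _ ≤ ∑' n, μ (S n (m n))ᶜ := measure_iUnion_le _
    _ ≤ ∑' n, (δ n : ℝ≥0∞) := ENNReal.tsum_le_tsum fun n => (hm n).le
    _ < ε := hδ

lemma aux_absorb {K : Set E} (hK : IsCompact K) {V : Set E} (hV : V ∈ 𝓝 (0 : E)) :
    ∃ n : ℕ, ∀ z ∈ K, z ∈ (((n : ℝ) + 1)) • V := by
  -- for each y, find δ_y > 0 and nbhd N_y with ball 0 δ_y • N_y ⊆ V
  have key : ∀ y : E, ∃ δ : ℝ, 0 < δ ∧ ∃ N ∈ 𝓝 y,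
      ∀ c : ℝ, |c| < δ → ∀ z ∈ N, c • z ∈ V := by
    intro y
    have hc : ContinuousAt (fun p : ℝ × E => p.1 • p.2) (0, y) := (continuous_smul).continuousAt
    have h0 : (fun p : ℝ × E => p.1 • p.2) (0, y) = 0 := zero_smul ℝ y
    have := hc (by rw [h0]; exact hV)
    rw [nhds_prod_eq] at this
    obtain ⟨A, hA, N, hN, hAN⟩ := Filter.mem_prod_iff.mp this
    obtain ⟨δ, hδ, hball⟩ := Metric.mem_nhds_iff.mp hA
    refine ⟨δ, hδ, N, hN, fun c hc' z hz => ?_⟩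
    have hcA : c ∈ A := hball (by simpa [Real.dist_eq] using hc')
    exact hAN (Set.mk_mem_prod hcA hz)
  choose δ hδ N hN hNV using key
  obtain ⟨t, ht⟩ := hK.elim_nhds_subcover N (fun y _ => hN y)
  by_cases hte : t.Nonempty
  · obtain ⟨δ₀, hδ₀pos, hδ₀⟩ : ∃ d : ℝ, 0 < d ∧ ∀ y ∈ t, d ≤ δ y := by
      refine ⟨t.inf' hte δ, ?_, fun y hy => Finset.inf'_le δ hy⟩
      obtain ⟨y₀, hy₀, hval⟩ := Finset.exists_mem_eq_inf' hte δ
      rw [hval]; exact hδ y₀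
    obtain ⟨n, hn⟩ := exists_nat_one_div_lt hδ₀pos
    refine ⟨n, fun z hz => ?_⟩
    obtain ⟨y, hy, hzy⟩ := Set.mem_iUnion₂.mp (ht.2 hz)
    have h1 : (1 / ((n : ℝ) + 1)) • z ∈ V := by
      refine hNV y _ ?_ z hzy
      rw [abs_of_pos (by positivity)]
      exact lt_of_lt_of_le hn (hδ₀ y hy)
    refine ⟨(1 / ((n : ℝ) + 1)) • z, h1, ?_⟩
    show ((n : ℝ) + 1) • (1 / ((n : ℝ) + 1)) • z = z
    rw [smul_smul, mul_one_div, div_self (by positivity), one_smul]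
  · refine ⟨0, fun z hz => absurd (ht.2 hz) ?_⟩
    rw [Finset.not_nonempty_iff_eq_empty.mp hte]
    simp

/-- The orbit `{T t x : t ∈ (0,1]} ∪ {0}` is contained in a compact set. -/

lemma aux_orbit (T : ℝ → E ≃L[ℝ] E)
    (hcont : ∀ x : E, ContinuousOn (fun t : ℝ => T t x) (Set.Ioi 0))
    (hlim : ∀ x : E, Tendsto (fun t : ℝ => T t x) (𝓝[>] 0) (𝓝 0)) (x : E) :
    ∃ C : Set E, IsCompact C ∧ ∀ t ∈ Set.Ioc (0:ℝ) 1, T t x ∈ C := by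
  classical
  set g : ℝ → E := fun t => if 0 < t then T t x else 0 with hg
  have hgc : ContinuousOn g (Set.Icc 0 1) := by
    intro t ht
    rcases eq_or_lt_of_le ht.1 with h0 | h0
    · -- t = 0
      have hg0 : g 0 = 0 := by simp [hg]
      rw [← h0]
      unfold ContinuousWithinAt
      rw [hg0]
      have hsub : Set.Icc (0:ℝ) 1 ⊆ insert 0 (Set.Ioi 0) := by
        intro s hs
        rcases eq_or_lt_of_le hs.1 with h | h
        · exact Or.inl h.symm
        · exact Or.inr h
      refine Tendsto.mono_left ?_ (nhdsWithin_mono _ hsub)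
      rw [nhdsWithin_insert]
      refine Tendsto.sup ?_ ?_
      · simpa [hg0] using (tendsto_pure_pure g 0).mono_right (pure_le_nhds _)
      · refine ((hlim x).congr' ?_)
        filter_upwards [self_mem_nhdsWithin] with s hs
        simp [hg, Set.mem_Ioi.mp hs]
    · -- 0 < t
      have : ContinuousAt g t := by
        have h1 : ContinuousAt (fun s : ℝ => T s x) t :=
          (hcont x).continuousAt (Ioi_mem_nhds h0)
        refine h1.congr ?_
        filter_upwards [Ioi_mem_nhds h0] with s hs
        simp [hg, Set.mem_Ioi.mp hs]
      exact this.continuousWithinAt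
  refine ⟨g '' Set.Icc 0 1, (isCompact_Icc).image_of_continuousOn hgc, fun t ht => ?_⟩
  refine ⟨t, ⟨ht.1.le, ht.2⟩, ?_⟩
  simp [hg, ht.1]

lemma aux_equi (T : ℝ → E ≃L[ℝ] E)
    (hcont : ∀ x : E, ContinuousOn (fun t : ℝ => T t x) (Set.Ioi 0))
    (hlim : ∀ x : E, Tendsto (fun t : ℝ => T t x) (𝓝[>] 0) (𝓝 0))
    {U : Set E} (hU : U ∈ 𝓝 (0 : E)) :
    ∃ W ∈ 𝓝 (0 : E), ∀ t ∈ Set.Ioc (0:ℝ) 1, ∀ w ∈ W, T t w ∈ U := by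
  have : Nonempty E := ⟨0⟩
  -- a symmetric "quarter" neighborhood
  obtain ⟨V₁, hV₁, hV₁4⟩ := exists_nhds_zero_quarter hU
  set V : Set E := V₁ ∩ (fun y : E => -y) ⁻¹' V₁ with hVdef
  have hV : V ∈ 𝓝 (0 : E) := by
    refine Filter.inter_mem hV₁ ?_
    have : Tendsto (fun y : E => -y) (𝓝 0) (𝓝 (0:E)) := by
      simpa using (continuous_neg (G := E)).tendsto (0 : E)
    exact this hV₁
  have hVsub : V ⊆ V₁ := Set.inter_subset_left
  have hVsymm : ∀ y ∈ V, -y ∈ V := by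
    intro y hy
    exact ⟨hy.2, by simpa using hy.1⟩
  -- closure V ⊆ V + V
  have hclV : ∀ a ∈ closure V, ∃ v ∈ V, ∃ w ∈ V, a = v + w := by
    intro a ha
    have hnbhd : (fun y : E => a + -y) '' V ∈ 𝓝 a := by
      have h1 : Continuous (fun y : E => a + -y) := by continuity
      have heq : (fun y : E => a + -y) '' V = (fun y : E => -a + y) ⁻¹' ((fun y : E => -y) '' V) := by
        ext z
        simp only [Set.mem_image, Set.mem_preimage]
        constructor
        · rintro ⟨y, hy, rfl⟩
          exact ⟨y, hy, by show -y = -a + (a + -y); abel⟩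
        · rintro ⟨y, hy, hz⟩
          refine ⟨y, hy, ?_⟩
          have h' : -y = -a + z := hz
          show a + -y = z
          rw [h']
          abel
      rw [heq]
      have h2 : (fun y : E => -y) '' V ∈ 𝓝 (0 : E) := by
        have : (fun y : E => -y) '' V ⊇ V := fun y hy => ⟨-y, hVsymm y hy, by simp⟩
        exact Filter.mem_of_superset hV this
      have h3 : Tendsto (fun y : E => -a + y) (𝓝 a) (𝓝 (0:E)) := by
        have hc3 : Continuous (fun y : E => -a + y) := continuous_const.add continuous_id
        have := hc3.tendsto a
        simpa using this
      exact h3 h2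
    obtain ⟨z, hzI, hzV⟩ := mem_closure_iff_nhds.mp ha _ hnbhd
    obtain ⟨y, hyV, hyz⟩ := hzI
    have h' : a + -y = z := hyz
    exact ⟨z, hzV, y, hyV, by rw [← h']; abel⟩
  -- difference of closure elements lands in U
  have hdiff : ∀ a ∈ closure V, ∀ b ∈ closure V, a - b ∈ U := by
    intro a ha b hb
    obtain ⟨v₁, hv₁, v₂, hv₂, rfl⟩ := hclV a ha
    obtain ⟨w₁, hw₁, w₂, hw₂, rfl⟩ := hclV b hb
    have h := hV₁4 (hVsub hv₁) (hVsub hv₂) (hVsub (hVsymm _ hw₁)) (hVsub (hVsymm _ hw₂))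
    have heq : v₁ + v₂ - (w₁ + w₂) = v₁ + v₂ + -w₁ + -w₂ := by abel
    rw [heq]
    exact h
  -- Baire: the closed sets F n cover E
  set clV : Set E := closure V with hclVdef
  set F : ℕ → Set E := fun n =>
    ⋂ t ∈ Set.Ioc (0:ℝ) 1, (fun y : E => T t y) ⁻¹' ((((n:ℝ) + 1)) • clV) with hFdef
  have hFclosed : ∀ n, IsClosed (F n) := by
    intro n
    refine isClosed_biInter fun t ht => ?_
    have hsmul : IsClosed ((((n:ℝ) + 1)) • clV) := by
      have hne : ((n:ℝ) + 1) ≠ 0 := by positivity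
      have := (Homeomorph.smulOfNeZero ((n:ℝ)+1) hne (α := E)).isClosedMap clV isClosed_closure
      simpa [Set.image_smul] using this
    exact hsmul.preimage (T t).continuous
  have hFcover : ⋃ n, F n = Set.univ := by
    ext x
    simp only [Set.mem_iUnion, Set.mem_univ, iff_true]
    obtain ⟨C, hC, hCx⟩ := aux_orbit T hcont hlim x
    obtain ⟨n, hn⟩ := aux_absorb hC (Filter.mem_of_superset hV subset_closure)
    refine ⟨n, Set.mem_iInter₂.mpr fun t ht => hn _ (hCx t ht)⟩
  obtain ⟨n, hint⟩ := nonempty_interior_of_iUnion_of_closed hFclosed hFcover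
  obtain ⟨x₀, hx₀⟩ := hint
  have hFn : F n ∈ 𝓝 x₀ := mem_interior_iff_mem_nhds.mp hx₀
  -- translate to 0
  have hW₀ : (fun y : E => x₀ + y) ⁻¹' F n ∈ 𝓝 (0 : E) := by
    have h1 : Tendsto (fun y : E => x₀ + y) (𝓝 0) (𝓝 x₀) := by
      have hc1 : Continuous (fun y : E => x₀ + y) := continuous_const.add continuous_id
      have := hc1.tendsto (0 : E)
      simpa using this
    exact h1 hFn
  set c : ℝ := (((n:ℝ) + 1))⁻¹ with hcdef
  have hcne : c ≠ 0 := by positivity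
  refine ⟨c • ((fun y : E => x₀ + y) ⁻¹' F n), ?_, ?_⟩
  · have := (Homeomorph.smulOfNeZero c hcne (α := E)).isOpenEmbedding.image_mem_nhds.mpr hW₀
    simpa [Set.image_smul] using this
  · rintro t ht w ⟨w₀, hw₀, rfl⟩
    -- T t x₀ ∈ (n+1) • clV and T t (x₀ + w₀) ∈ (n+1) • clV
    have hx₀mem : x₀ ∈ F n := mem_of_mem_nhds hFn
    have h1 : T t x₀ ∈ (((n:ℝ) + 1)) • clV := Set.mem_iInter₂.mp hx₀mem t ht
    have h2 : T t (x₀ + w₀) ∈ (((n:ℝ) + 1)) • clV := Set.mem_iInter₂.mp hw₀ t ht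
    obtain ⟨a, ha, hae⟩ := h2
    obtain ⟨b, hb, hbe⟩ := h1
    have hae' : ((n:ℝ) + 1) • a = T t (x₀ + w₀) := hae
    have hbe' : ((n:ℝ) + 1) • b = T t x₀ := hbe
    have hTw : T t w₀ = ((n:ℝ) + 1) • a - ((n:ℝ) + 1) • b := by
      have hsum : (T t) (x₀ + w₀) - (T t) x₀ = T t w₀ := by
        rw [map_add]; abel
      rw [← hsum, hae', hbe']
    have hfin : T t (c • w₀) = a - b := by
      have hsm : T t (c • w₀) = c • T t w₀ := (T t).map_smul c w₀
      rw [hsm, hTw, smul_sub, smul_smul, smul_smul, hcdef,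
        inv_mul_cancel₀ (by positivity : ((n:ℝ)+1) ≠ 0), one_smul, one_smul]
    rw [hfin]
    exact hdiff a ha b hb

lemma aux_unif (T : ℝ → E ≃L[ℝ] E)
    (hcont : ∀ x : E, ContinuousOn (fun t : ℝ => T t x) (Set.Ioi 0))
    (hlim : ∀ x : E, Tendsto (fun t : ℝ => T t x) (𝓝[>] 0) (𝓝 0))
    {K : Set E} (hK : IsCompact K) {U : Set E} (hU : U ∈ 𝓝 (0 : E)) :
    ∃ s : ℝ, 0 < s ∧ ∃ G : Set E, IsOpen G ∧ K ⊆ G ∧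
      ∀ t : ℝ, 0 < t → t < s → ∀ x ∈ G, T t x ∈ U := by
  obtain ⟨V, hV, hVhalf⟩ := exists_nhds_zero_half hU
  obtain ⟨W, hW, hWequi⟩ := aux_equi T hcont hlim hV
  set W₀ : Set E := interior W with hW₀def
  have hW₀open : IsOpen W₀ := isOpen_interior
  have hW₀mem : (0 : E) ∈ W₀ := mem_interior_iff_mem_nhds.mpr hW
  -- pointwise convergence with explicit window
  have hpt : ∀ y : E, ∃ s : ℝ, 0 < s ∧ ∀ t : ℝ, 0 < t → t < s → T t y ∈ V := by
    intro y
    have := hlim y hV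
    obtain ⟨u, hu, hsub⟩ := mem_nhdsGT_iff_exists_Ioo_subset.mp this
    exact ⟨u, hu, fun t ht1 ht2 => hsub ⟨ht1, ht2⟩⟩
  choose sf hsf hsfV using hpt
  set N : E → Set E := fun y => (fun z : E => -y + z) ⁻¹' W₀ with hNdef
  have hNopen : ∀ y, IsOpen (N y) := fun y =>
    hW₀open.preimage (continuous_const.add continuous_id)
  have hNmem : ∀ y, y ∈ N y := fun y => by
    simp only [hNdef, Set.mem_preimage, neg_add_cancel]
    exact hW₀mem
  obtain ⟨tf, htf⟩ := hK.elim_nhds_subcover N (fun y _ => (hNopen y).mem_nhds (hNmem y))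
  rcases tf.eq_empty_or_nonempty with hte | hte
  · refine ⟨1, one_pos, ∅, isOpen_empty, ?_, by simp⟩
    intro x hx
    have := htf.2 hx
    rw [hte] at this
    simpa using this
  · set s : ℝ := min 1 (tf.inf' hte sf) with hsdef
    have hspos : 0 < s := by
      refine lt_min one_pos ?_
      obtain ⟨y₀, hy₀, hval⟩ := Finset.exists_mem_eq_inf' hte sf
      rw [hval]; exact hsf y₀
    refine ⟨s, hspos, ⋃ y ∈ tf, N y, isOpen_biUnion (fun y _ => hNopen y), htf.2, ?_⟩
    intro t ht1 ht2 x hx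
    obtain ⟨y, hy, hxy⟩ := Set.mem_iUnion₂.mp hx
    have hxy' : -y + x ∈ W₀ := hxy
    have h1 : T t y ∈ V := by
      refine hsfV y t ht1 (lt_of_lt_of_le ht2 ?_)
      exact le_trans (min_le_right _ _) (Finset.inf'_le sf hy)
    have h2 : T t (-y + x) ∈ V := by
      refine hWequi t ⟨ht1, le_of_lt (lt_of_lt_of_le ht2 (min_le_left _ _))⟩ _
        (interior_subset hxy')
    have hdecomp : T t x = T t y + T t (-y + x) := by
      rw [← map_add]
      congr 1
      abel
    rw [hdecomp]
    exact hVhalf _ h1 _ h2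


/-- If `(T_t) ∈ 𝓛₊` and `Γ` is relatively compact in `P(E)`, then
`T_t(λ) → δ₀` as `t → 0` uniformly for `λ ∈ Γ`. -/
theorem stmt17 (T : ℝ → E ≃L[ℝ] E) (hT : IsLPlus T)
    (Γ : Set (ProbabilityMeasure E)) (hΓ : IsCompact (closure Γ)) :
    ∀ ε : NNReal, 0 < ε → ∀ U : Set E, IsOpen U → (0 : E) ∈ U →
      ∃ s : ℝ, 0 < s ∧ ∀ t : ℝ, 0 < t → t < s → ∀ lam ∈ Γ,
        (pmap (T t) lam) Uᶜ < ε := by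
  intro ε hε U hUopen hU0
  -- reduce to small ε
  set ε' : ℝ≥0 := min ε (1/2) with hε'def
  have hε'pos : 0 < ε' := lt_min hε (by norm_num)
  have hε'le : ε' ≤ ε := min_le_left _ _
  have hε'le1 : (ε' : ℝ≥0∞) ≤ 1 := by
    refine le_trans (ENNReal.coe_le_coe.mpr (min_le_right _ _)) (by norm_num)
  suffices h : ∃ s : ℝ, 0 < s ∧ ∀ t : ℝ, 0 < t → t < s → ∀ lam ∈ Γ,
      (pmap (T t) lam) Uᶜ < ε' by
    obtain ⟨s, hs, hss⟩ := h
    exact ⟨s, hs, fun t ht1 ht2 lam hlam => lt_of_lt_of_le (hss t ht1 ht2 lam hlam) hε'le⟩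
  by_contra hcon
  push_neg at hcon
  have hseq : ∀ n : ℕ, ∃ t : ℝ, 0 < t ∧ t < 1/(n+1) ∧ ∃ lam ∈ Γ,
      ε' ≤ (pmap (T t) lam) Uᶜ := by
    intro n
    obtain ⟨t, ht1, ht2, lam, hlam, hge⟩ := hcon (1/(n+1)) (by positivity)
    exact ⟨t, ht1, ht2, lam, hlam, hge⟩
  choose t ht1 ht2 lam hlamΓ hlam using hseq
  -- t n → 0
  have htt0 : Tendsto t atTop (𝓝 0) := by
    refine squeeze_zero (fun n => (ht1 n).le) (fun n => (ht2 n).le) ?_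
    exact tendsto_one_div_add_atTop_nhds_zero_nat
  -- sequential compactness
  obtain ⟨μlim, hμlimΓ, φ, hφ, htend⟩ :=
    hΓ.isSeqCompact (fun n => subset_closure (hlamΓ n))
  -- tightness of the limit
  have : IsProbabilityMeasure (μlim : Measure E) := μlim.prop
  obtain ⟨K, hKcomp, hKc⟩ := aux_tight_s17 (μlim : Measure E)
    (ENNReal.coe_pos.mpr hε'pos)
  -- uniform convergence on a neighborhood of K
  obtain ⟨s, hs, G, hGopen, hKG, hGU⟩ :=
    aux_unif T hT.2.1 hT.2.2 hKcomp (hUopen.mem_nhds hU0)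
  -- liminf bound
  have hliminf : (μlim : Measure E) G ≤
      atTop.liminf (fun n => (lam (φ n) : Measure E) G) :=
    ProbabilityMeasure.le_liminf_measure_open_of_tendsto htend hGopen
  set d : ℝ≥0∞ := 1 - (ε' : ℝ≥0∞) with hddef
  have hd : d < (μlim : Measure E) K := by
    rw [hddef, ENNReal.sub_lt_iff_lt_right ENNReal.coe_ne_top hε'le1]
    calc (1:ℝ≥0∞) = (μlim : Measure E) K + (μlim : Measure E) Kᶜ := by
          rw [measure_add_measure_compl hKcomp.isClosed.measurableSet]
          simp
    _ < (μlim : Measure E) K + ε' :=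
          ENNReal.add_lt_add_left (measure_ne_top _ _) hKc
  have hdliminf : d < atTop.liminf (fun n => (lam (φ n) : Measure E) G) :=
    lt_of_lt_of_le (lt_of_lt_of_le hd (measure_mono hKG)) hliminf
  have hev1 : ∀ᶠ n in atTop, d < (lam (φ n) : Measure E) G :=
    eventually_lt_of_lt_liminf hdliminf
  have hev2 : ∀ᶠ n in atTop, t (φ n) < s :=
    (htt0.comp hφ.tendsto_atTop).eventually_lt_const hs
  obtain ⟨n, hn1, hn2⟩ := (hev1.and hev2).exists
  -- contradiction
  set t' : ℝ := t (φ n)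
  set ν : ProbabilityMeasure E := lam (φ n)
  have hmeasUc : MeasurableSet Uᶜ := hUopen.isClosed_compl.measurableSet
  have happ : ((pmap (T t') ν : ProbabilityMeasure E) : Measure E) Uᶜ
      = (ν : Measure E) ((T t') ⁻¹' Uᶜ) := by
    simp only [SemiSelfDecomp.pmap]
    rw [ProbabilityMeasure.toMeasure_map,
      Measure.map_apply ((T t').continuous.measurable) hmeasUc]
  have hsub : (T t') ⁻¹' Uᶜ ⊆ Gᶜ := by
    intro x hx
    intro hxG
    exact hx (hGU t' (ht1 (φ n)) hn2 x hxG)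
  have hge : (ε' : ℝ≥0∞) ≤ (ν : Measure E) Gᶜ := by
    have h0 : (ε' : ℝ≥0∞) ≤ ((pmap (T t') ν : ProbabilityMeasure E) : Measure E) Uᶜ := by
      rw [← ProbabilityMeasure.ennreal_coeFn_eq_coeFn_toMeasure]
      exact_mod_cast hlam (φ n)
    exact le_trans h0 (happ ▸ measure_mono hsub)
  have hle : (ν : Measure E) G ≤ d := by
    rw [hddef]
    refine ENNReal.le_sub_of_add_le_right ENNReal.coe_ne_top ?_
    calc (ν : Measure E) G + ε' ≤ (ν : Measure E) G + (ν : Measure E) Gᶜ :=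
          add_le_add_right hge _
    _ = 1 := by rw [measure_add_measure_compl hGopen.measurableSet]; simp
  exact absurd hn1 (not_lt.mpr hle)

end SemiSelfDecomp
end
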